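/- Sufficient decrease of proximal gradient: let h : ℝⁿ → ℝ be differentiable with L-Lipschitz gradient, r : ℝⁿ → ℝ convex, and set x⁺ = prox_{(1/L)·r}(x − (1/L)∇h(x)). Then h(x⁺) + r(x⁺) ≤ h(x) + r(x) − (L/2)‖x⁺ − x‖². -/

import Mathlib

open Set
open scoped RealInnerProductSpace

lemma descent_lemma {n : ℕ} (h : EuclideanSpace ℝ (Fin n) → ℝ)
    (h' : EuclideanSpace ℝ (Fin n) → EuclideanSpace ℝ (Fin n)) (L : ℝ) (hL : 0 < L)
    (hdiff : ∀ x, HasGradientAt h (h' x) x)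
    (hlip : ∀ x₁ x₂, ‖h' x₁ - h' x₂‖ ≤ L * ‖x₁ - x₂‖)
    (x y : EuclideanSpace ℝ (Fin n)) :
    h y ≤ h x + ⟪h' x, y - x⟫ + L / 2 * ‖y - x‖ ^ 2 := by
  set d := y - x with hd
  have hcont : Continuous h' := by
    refine (LipschitzWith.of_dist_le_mul (K := ⟨L, hL.le⟩) ?_).continuous
    intro a b
    rw [dist_eq_norm, dist_eq_norm]; exact hlip a b
  have hline : ∀ t : ℝ, HasDerivAt (fun t : ℝ => h (x + t • d))
      ⟪h' (x + t • d), d⟫ t := by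
    intro t
    have hc : HasDerivAt (fun t : ℝ => x + t • d) d t := by
      simpa using ((hasDerivAt_id t).smul_const d).const_add x
    have := (hdiff (x + t • d)).hasFDerivAt.comp_hasDerivAt t hc
    simpa [InnerProductSpace.toDual_apply_apply, Function.comp_def] using this
  have hci : Continuous fun t : ℝ => (⟪h' (x + t • d), d⟫ : ℝ) := by
    exact Continuous.inner (hcont.comp (by continuity)) continuous_const
  have key : h y - h x = ∫ t in (0:ℝ)..1, ⟪h' (x + t • d), d⟫ := by
    have := intervalIntegral.integral_eq_sub_of_hasDerivAt (a := (0:ℝ)) (b := 1)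
      (fun t _ => hline t) (hci.intervalIntegrable 0 1)
    rw [this]
    norm_num [hd]
  have hb : ∀ t ∈ Icc (0:ℝ) 1, ⟪h' (x + t • d), d⟫ ≤ ⟪h' x, d⟫ + L * ‖d‖ ^ 2 * t := by
    intro t ht
    have h1 : ⟪h' (x + t • d) - h' x, d⟫ ≤ ‖h' (x + t • d) - h' x‖ * ‖d‖ :=
      real_inner_le_norm _ _
    have h2 : ‖h' (x + t • d) - h' x‖ ≤ L * (t * ‖d‖) := by
      have := hlip (x + t • d) x
      simpa [norm_smul, abs_of_nonneg ht.1] using this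
    have h3 : ⟪h' (x + t • d) - h' x, d⟫ = ⟪h' (x + t • d), d⟫ - ⟪h' x, d⟫ :=
      inner_sub_left _ _ _
    nlinarith [norm_nonneg d, norm_nonneg (h' (x + t • d) - h' x)]
  have hint : (∫ t in (0:ℝ)..1, ⟪h' (x + t • d), d⟫)
      ≤ ∫ t in (0:ℝ)..1, (⟪h' x, d⟫ + L * ‖d‖ ^ 2 * t) := by
    apply intervalIntegral.integral_mono_on (by norm_num) (hci.intervalIntegrable 0 1)
      ((continuous_const.add (continuous_const.mul continuous_id)).intervalIntegrable 0 1) hb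
  have hval : (∫ t in (0:ℝ)..1, (⟪h' x, d⟫ + L * ‖d‖ ^ 2 * t))
      = ⟪h' x, d⟫ + L / 2 * ‖d‖ ^ 2 := by
    rw [intervalIntegral.integral_add intervalIntegrable_const
      (Continuous.intervalIntegrable (by continuity :
        Continuous fun t : ℝ => L * ‖d‖ ^ 2 * t) 0 1),
      intervalIntegral.integral_const_mul, integral_id]
    norm_num
    ring
  linarith [key ▸ (hval ▸ hint)]

theorem stmt_5 (n : ℕ) (h r : EuclideanSpace ℝ (Fin n) → ℝ)
    (h' : EuclideanSpace ℝ (Fin n) → EuclideanSpace ℝ (Fin n))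
    (L : ℝ) (hL : 0 < L)
    (hdiff : ∀ x, HasGradientAt h (h' x) x)
    (hlip : ∀ x₁ x₂, ‖h' x₁ - h' x₂‖ ≤ L * ‖x₁ - x₂‖)
    (hr : ConvexOn ℝ univ r)
    (x xplus : EuclideanSpace ℝ (Fin n))
    (hprox : IsMinOn
      (fun z => (1 / 2 : ℝ) * ‖(x - (1 / L) • h' x) - z‖ ^ 2 + (1 / L) * r z)
      univ xplus) :
    h xplus + r xplus ≤ h x + r x - (L / 2) * ‖xplus - x‖ ^ 2 := by
  set g := h' x with hg
  set v := x - (1 / L) • g with hv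
  set u := x - xplus with hu
  have hvar : ⟪v - xplus, u⟫ ≤ (1 / L) * (r x - r xplus) := by
    rcases eq_or_ne u 0 with h0 | h0
    · have hx : x = xplus := by
        have := sub_eq_zero.mp h0
        exact this
      simp [h0, hx]
    · have hu2 : 0 < ‖u‖ ^ 2 := pow_pos (norm_pos_iff.mpr h0) 2
      apply le_of_forall_pos_le_add
      intro ε hε
      set t := min 1 (2 * ε / ‖u‖ ^ 2) with htdef
      have ht0 : 0 < t := lt_min one_pos (div_pos (by linarith) hu2)
      have ht1 : t ≤ 1 := min_le_left _ _
      have hteps : t / 2 * ‖u‖ ^ 2 ≤ ε := by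
        have : t ≤ 2 * ε / ‖u‖ ^ 2 := min_le_right _ _
        rw [le_div_iff₀ hu2] at this
        linarith
      have hz := isMinOn_iff.mp hprox (xplus + t • u) (mem_univ _)
      have hrz : r (xplus + t • u) ≤ (1 - t) * r xplus + t * r x := by
        have := hr.2 (mem_univ xplus) (mem_univ x) (by linarith : (0:ℝ) ≤ 1 - t)
          ht0.le (by ring)
        have heq : (1 - t) • xplus + t • x = xplus + t • u := by
          rw [hu]; module
        rw [heq] at this
        simpa using this
      have hnorm : ‖v - (xplus + t • u)‖ ^ 2
          = ‖v - xplus‖ ^ 2 - 2 * t * ⟪v - xplus, u⟫ + t ^ 2 * ‖u‖ ^ 2 := by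
        have : v - (xplus + t • u) = (v - xplus) - t • u := by abel
        rw [this, norm_sub_sq_real, real_inner_smul_right, norm_smul, Real.norm_eq_abs,
          abs_of_nonneg ht0.le]
        ring
      have hLpos : 0 < 1 / L := by positivity
      rw [hnorm] at hz
      -- hz : ½‖v-xplus‖² + (1/L) r xplus ≤ ½(‖v-xplus‖² - 2t⟪⟫ + t²‖u‖²) + (1/L) r(z_t)
      have step : t * ⟪v - xplus, u⟫
          ≤ t ^ 2 / 2 * ‖u‖ ^ 2 + (1 / L) * (t * (r x - r xplus)) := by
        nlinarith [mul_le_mul_of_nonneg_left hrz hLpos.le]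
      have := le_of_mul_le_mul_left (by nlinarith : t * ⟪v - xplus, u⟫
          ≤ t * (t / 2 * ‖u‖ ^ 2 + (1 / L) * (r x - r xplus))) ht0
      linarith
  -- expand the variational inequality
  have hvexp : ⟪v - xplus, u⟫ = ‖u‖ ^ 2 - (1 / L) * ⟪g, u⟫ := by
    have : v - xplus = u - (1 / L) • g := by rw [hv, hu]; abel
    rw [this, inner_sub_left, real_inner_smul_left, real_inner_self_eq_norm_sq]
  have hkey : L * ‖u‖ ^ 2 - ⟪g, u⟫ ≤ r x - r xplus := by
    rw [hvexp] at hvar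
    obtain ⟨A, hA⟩ : ∃ A, (⟪g, u⟫ : ℝ) = A := ⟨_, rfl⟩
    rw [hA] at hvar ⊢
    have hLne : L ≠ 0 := ne_of_gt hL
    have h2 : L * (‖u‖ ^ 2 - 1 / L * A) = L * ‖u‖ ^ 2 - A := by
      field_simp
    have h3 : L * (1 / L * (r x - r xplus)) = r x - r xplus := by
      field_simp
    have h4 := mul_le_mul_of_nonneg_left hvar hL.le
    rw [h2, h3] at h4
    exact h4
  have hdes := descent_lemma h h' L hL hdiff hlip x xplus
  have hinner : ⟪g, xplus - x⟫ = - ⟪g, u⟫ := by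
    rw [hu, ← inner_neg_right]; congr 1; abel
  have hnorm2 : ‖xplus - x‖ = ‖u‖ := by rw [hu, norm_sub_rev]
  rw [hinner, hnorm2] at hdes
  rw [hnorm2]
  linarith
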